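/- Consider binary labels Y ∈ {+1,-1} with class-conditional distributions P_+ = P(X|Y=+1) and P_- = P(X|Y=-1) having densities, and class priors π_+ > π_- > 0 with π_+ + π_- = 1. Let π_S = π_+² + π_-², P̃_S = (π_+² P_+ + π_-² P_-)/π_S, and P̃_D = (P_+ + P_-)/2. Then with α = π_S/(2π_+²), we have 0 < α < 1 and P̃_D = α·P̃_S + (1-α)·P_-. Hence P̃_D is reducible with respect to P̃_S. -/

import Mathlib

open MeasureTheory ENNReal

theorem stmt_15 {X : Type*} [MeasurableSpace X]
    (Pp Pm : Measure X) [IsProbabilityMeasure Pp] [IsProbabilityMeasure Pm]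
    (πp πm : ℝ) (hπp : 0 < πp) (hπm : 0 < πm) (hsum : πp + πm = 1)
    (hgt : πm < πp)
    (πS : ℝ) (hπS : πS = πp ^ 2 + πm ^ 2)
    (PS PD : Measure X)
    (hPS : PS = ENNReal.ofReal (πp ^ 2 / πS) • Pp +
        ENNReal.ofReal (πm ^ 2 / πS) • Pm)
    (hPD : PD = ENNReal.ofReal (1 / 2) • Pp + ENNReal.ofReal (1 / 2) • Pm)
    (α : ℝ) (hα : α = πS / (2 * πp ^ 2)) :
    0 < α ∧ α < 1 ∧
      PD = ENNReal.ofReal α • PS + ENNReal.ofReal (1 - α) • Pm := by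
  have hπSpos : 0 < πS := by nlinarith
  have hαpos : 0 < α := by rw [hα]; positivity
  have hα1 : α < 1 := by
    rw [hα, div_lt_one (by positivity)]
    nlinarith
  refine ⟨hαpos, hα1, ?_⟩
  have h1 : α * (πp ^ 2 / πS) = 1 / 2 := by
    field_simp [hα, hπS]
    rw [hα, div_mul_eq_mul_div, div_mul_eq_mul_div, div_eq_iff (by positivity)]
    ring
  have h2 : α * (πm ^ 2 / πS) + (1 - α) = 1 / 2 := by
    rw [hα, hπS]
    field_simp
    ring
  rw [hPS, hPD, smul_add, smul_smul, smul_smul,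
    ← ENNReal.ofReal_mul hαpos.le, ← ENNReal.ofReal_mul hαpos.le, h1, add_assoc,
    ← add_smul, ← ENNReal.ofReal_add (by positivity) (by linarith), h2]
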